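/- Let U, V ∈ ℝ^{d×k}, Q ∈ ℝ^{d×B}, and C ∈ ℝ^{B×B}, and set U' = [U | Q C], V' = [V | (I − V Uᵀ) Q]. Then the low-rank product satisfies the additive increment formula U' V'ᵀ = U Vᵀ + Q C Qᵀ (I − U Vᵀ). -/

import Mathlib

open Matrix

/-- Additive increment formula for the batch column concatenation:
`U' V'ᵀ = U Vᵀ + Q C Qᵀ (I − U Vᵀ)`. -/
theorem batch_concat_increment
    (d k B : ℕ) (U V : Matrix (Fin d) (Fin k) ℝ)
    (Q : Matrix (Fin d) (Fin B) ℝ) (C : Matrix (Fin B) (Fin B) ℝ)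
    (U' V' : Matrix (Fin d) (Fin (k + B)) ℝ)
    (hU' : ∀ i, U' i = Fin.append (U i) (fun j => (Q * C) i j))
    (hV' : ∀ i, V' i = Fin.append (V i) (fun j => (((1 - V * Uᵀ) * Q : Matrix (Fin d) (Fin B) ℝ)) i j)) :
    U' * V'ᵀ = U * Vᵀ + Q * C * Qᵀ * (1 - U * Vᵀ) := by
  have key : U' * V'ᵀ = U * Vᵀ + (Q * C) * ((1 - V * Uᵀ) * Q)ᵀ := by
    ext i j
    simp only [mul_apply, transpose_apply, Matrix.add_apply, hU', hV', Fin.sum_univ_add,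
      Fin.append_left, Fin.append_right]
  rw [key, transpose_mul, transpose_sub, transpose_one, transpose_mul, transpose_transpose,
    Matrix.mul_assoc]
  simp [Matrix.mul_assoc]
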